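/- Closure of the winning region of a safety game: let G = (G, g₀, Σ_I, Σ_O, δ, F) be a safety game with Σ_O nonempty, and let W be the winning region of the system (the set of states from which a history-dependent winning strategy exists). Then W ⊆ F, and for every g ∈ W and every input σ_I ∈ Σ_I there exists an output σ_O ∈ Σ_O such that δ(g, σ_I, σ_O) ∈ W. -/

import Mathlib

/-- The play of a safety game with transition function `δ` from state `g` under
input sequence `x` and output sequence `y`. -/
def play {G SI SO : Type*} (δ : G → SI → SO → G) (g : G) (x : ℕ → SI) (y : ℕ → SO) :
    ℕ → G
  | 0 => g
  | n + 1 => δ (play δ g x y n) (x n) (y n)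

/-- A (history-dependent) system strategy `st` (mapping the input history and the
current input letter to an output letter) is winning from state `g` if for every
input sequence the play visits only states in `F`. -/
def histWinningFrom {G SI SO : Type*} (δ : G → SI → SO → G) (F : Set G)
    (st : List SI → SI → SO) (g : G) : Prop :=
  ∀ x : ℕ → SI, ∀ i : ℕ,
    play δ g x (fun j => st ((List.range j).map x) (x j)) i ∈ F

/-- The winning region: the set of states from which some (history-dependent)
winning strategy for the system exists. -/
def winningRegion {G SI SO : Type*} (δ : G → SI → SO → G) (F : Set G) : Set G :=
  {g | ∃ st : List SI → SI → SO, histWinningFrom δ F st g}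

lemma play_shift {G SI SO : Type*} (δ : G → SI → SO → G) (g : G) (x : ℕ → SI)
    (y : ℕ → SO) (i : ℕ) :
    play δ (δ g (x 0) (y 0)) (fun n => x (n + 1)) (fun n => y (n + 1)) i
      = play δ g x y (i + 1) := by
  induction i with
  | zero => rfl
  | succ n ih => simp only [play, ih]

/-- Closure of the winning region of a safety game: the winning region `W` is
contained in the safe states `F`, and from every state of `W`, for every input
there is an output leading back into `W`. -/
theorem winningRegion_closed {G SI SO : Type*} [Nonempty SI] [Nonempty SO]
    (δ : G → SI → SO → G) (g0 : G) (F : Set G) :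
    winningRegion δ F ⊆ F ∧
      ∀ g ∈ winningRegion δ F, ∀ σI : SI, ∃ σO : SO,
        δ g σI σO ∈ winningRegion δ F := by
  constructor
  · rintro g ⟨st, h⟩
    exact h (fun _ => Classical.arbitrary SI) 0
  · rintro g ⟨st, h⟩ σI
    refine ⟨st [] σI, fun h' σ => st (σI :: h') σ, ?_⟩
    intro x i
    set x' : ℕ → SI := fun n => Nat.rec σI (fun k _ => x k) n with hx'
    have hx0 : x' 0 = σI := rfl
    have hxS : ∀ n, x' (n + 1) = x n := fun n => rfl
    have key := h x' (i + 1)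
    rw [← play_shift] at key
    have hy0 : (fun j => st ((List.range j).map x') (x' j)) 0 = st [] σI := rfl
    have hyS : (fun n => st ((List.range (n + 1)).map x') (x' (n + 1)))
        = fun n => st (σI :: (List.range n).map x) (x n) := by
      funext n
      rw [List.range_succ_eq_map, List.map_cons, List.map_map]
      rfl
    rw [hyS] at key
    simpa [hy0, hx0, hxS] using key
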